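/- Let f(x) = a_{n_r}x^{n_r} + ... + a_{n_1}x^{n_1} + εp^u where p is prime, u ≥ 2 not divisible by 3, the smallest positive exponent n_1 = 3, ε = ±1, p ∤ a_{n_1}a_{n_r}, all a_{n_i} ≠ 0, and p^u > |a_{n_1}| + ... + |a_{n_r}|. Then f is irreducible over Z. -/

import Mathlib

open Polynomial

theorem aux0 (p u : ℕ) (hp : p.Prime) (hu3 : ¬ 3 ∣ u) (a0 g1 g2 g3 h1 h2 h3 ε : ℤ)
    {g0 h0 : ℤ}
    (hε : ε = 1 ∨ ε = -1) (hpa0 : ¬ (p:ℤ) ∣ a0)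
    (e0 : g0*h0 = ε*(p:ℤ)^u)
    (e1 : g0*h1 + g1*h0 = 0)
    (e2 : g0*h2 + g1*h1 + g2*h0 = 0)
    (e3 : g0*h3 + g1*h2 + g2*h1 + g3*h0 = a0)
    (hg2 : 2 ≤ g0.natAbs) (hh2 : 2 ≤ h0.natAbs)
    (hg1 : ¬ (p:ℤ) ∣ g1) : False := by
  have hP : (p:ℤ) ≠ 0 := by exact_mod_cast hp.ne_zero
  have hPp : Prime (p:ℤ) := Nat.prime_iff_prime_int.mp hp
  -- extract p-powers
  have hd : g0.natAbs ∣ p^u := by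
    have h1 : g0 ∣ ε*(p:ℤ)^u := ⟨h0, e0.symm⟩
    have h2 : g0 ∣ (p:ℤ)^u := by
      rcases hε with rfl | rfl
      · simpa using h1
      · simpa [neg_mul, dvd_neg] using h1
    simpa [Int.natAbs_pow] using Int.natAbs_dvd_natAbs.mpr h2
  obtain ⟨v, hvu, hgv⟩ := (Nat.dvd_prime_pow hp).mp hd
  have hdh : h0.natAbs ∣ p^u := by
    have h1 : h0 ∣ ε*(p:ℤ)^u := ⟨g0, by linear_combination -e0⟩
    have h2 : h0 ∣ (p:ℤ)^u := by
      rcases hε with rfl | rfl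
      · simpa using h1
      · simpa [neg_mul, dvd_neg] using h1
    simpa [Int.natAbs_pow] using Int.natAbs_dvd_natAbs.mpr h2
  obtain ⟨w, hwu, hhw⟩ := (Nat.dvd_prime_pow hp).mp hdh
  have huvw : v + w = u := by
    have h1 : (g0*h0).natAbs = p^u := by
      rw [e0, Int.natAbs_mul]
      rcases hε with rfl | rfl <;> simp [Int.natAbs_pow]
    rw [Int.natAbs_mul, hgv, hhw, ← pow_add] at h1
    exact Nat.pow_right_injective hp.two_le h1
  have hv1 : 1 ≤ v := by
    rcases Nat.eq_zero_or_pos v with rfl | h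
    · rw [hgv] at hg2; simp at hg2
    · omega
  have hw1 : 1 ≤ w := by
    rcases Nat.eq_zero_or_pos w with rfl | h
    · rw [hhw] at hh2; simp at hh2
    · omega
  obtain ⟨δ, hδ, hg0⟩ : ∃ δ : ℤ, δ * δ = 1 ∧ g0 = δ * (p:ℤ)^v := by
    rcases Int.natAbs_eq g0 with h | h
    · exact ⟨1, by norm_num, by rw [h, hgv]; push_cast; ring⟩
    · exact ⟨-1, by norm_num, by rw [h, hgv]; push_cast; ring⟩
  obtain ⟨η, hη, hh0⟩ : ∃ η : ℤ, η * η = 1 ∧ h0 = η * (p:ℤ)^w := by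
    rcases Int.natAbs_eq h0 with h | h
    · exact ⟨1, by norm_num, by rw [h, hhw]; push_cast; ring⟩
    · exact ⟨-1, by norm_num, by rw [h, hhw]; push_cast; ring⟩
  subst hg0 hh0
  have punit : ∀ x c : ℤ, c * c = 1 → (p:ℤ) ∣ x * c → (p:ℤ) ∣ x := by
    intro x c hc hdvd
    have hx : x = x * c * c := by rw [mul_assoc, hc, mul_one]
    rw [hx]; exact hdvd.mul_right c
  rcases lt_trichotomy v w with hvw | hvw | hvw
  · -- v < w
    obtain ⟨m, rfl⟩ : ∃ m, w = v + m := ⟨w - v, by omega⟩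
    have hm1 : 1 ≤ m := by omega
    have h9 : (p:ℤ)^v * (δ*h1 + g1*η*(p:ℤ)^m) = 0 := by linear_combination e1
    have h10 := (mul_eq_zero.mp h9).resolve_left (pow_ne_zero v hP)
    have hh1 : h1 = -(δ*g1*η)*(p:ℤ)^m := by
      linear_combination δ*h10 - h1*hδ
    rcases lt_trichotomy v m with hvm | hvm | hvm
    · -- v < m : p ∣ h2 and then p ∣ a0
      obtain ⟨t, rfl⟩ : ∃ t, m = v + t := ⟨m - v, by omega⟩
      have ht1 : 1 ≤ t := by omega
      rw [hh1] at e2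
      have h9' : (p:ℤ)^v * (δ*h2 - δ*g1*g1*η*(p:ℤ)^t + g2*η*(p:ℤ)^(v+t)) = 0 := by
        linear_combination e2
      have h10' := (mul_eq_zero.mp h9').resolve_left (pow_ne_zero v hP)
      obtain ⟨t', rfl⟩ : ∃ t', t = t' + 1 := ⟨t - 1, by omega⟩
      have hdh2 : (p:ℤ) ∣ h2 := by
        apply punit _ δ hδ
        refine ⟨δ*g1*g1*η*(p:ℤ)^t' - g2*η*(p:ℤ)^(v+t'), ?_⟩
        linear_combination h10'
      apply hpa0
      rw [← e3, hh1]
      have hPv : (p:ℤ) ∣ (p:ℤ)^v := dvd_pow_self _ (by omega)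
      have hPm : (p:ℤ) ∣ (p:ℤ)^(v+(t'+1)) := dvd_pow_self _ (by omega)
      have hPw : (p:ℤ) ∣ (p:ℤ)^(v+(v+(t'+1))) := dvd_pow_self _ (by omega)
      refine dvd_add (dvd_add (dvd_add ?_ (hdh2.mul_left g1)) ?_) ?_
      · exact ((hPv.mul_left δ).mul_right h3)
      · exact ((hPm.mul_left (-(δ*g1*η))).mul_left g2)
      · exact ((hPw.mul_left η).mul_left g3)
    · -- v = m : 3 ∣ u
      exact hu3 ⟨v, by omega⟩
    · -- m < v : p ∣ g1
      obtain ⟨t, rfl⟩ : ∃ t, v = m + t := ⟨v - m, by omega⟩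
      have ht1 : 1 ≤ t := by omega
      rw [hh1] at e2
      have h9' : (p:ℤ)^m * (δ*(p:ℤ)^t*h2 - δ*g1*g1*η + g2*η*(p:ℤ)^(t+m)) = 0 := by
        linear_combination e2
      have h10' := (mul_eq_zero.mp h9').resolve_left (pow_ne_zero m hP)
      obtain ⟨t', rfl⟩ : ∃ t', t = t' + 1 := ⟨t - 1, by omega⟩
      have hgg : (p:ℤ) ∣ g1 * g1 := by
        apply punit _ (δ*η) (by linear_combination (η*η)*hδ + hη)
        refine ⟨δ*(p:ℤ)^t'*h2 + g2*η*(p:ℤ)^(t'+m), ?_⟩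
        linear_combination -h10'
      exact hg1 ((hPp.dvd_mul.mp hgg).elim id id)
  · -- v = w
    subst hvw
    have h9 : (p:ℤ)^v * (δ*h1 + g1*η) = 0 := by linear_combination e1
    have h10 := (mul_eq_zero.mp h9).resolve_left (pow_ne_zero v hP)
    obtain ⟨v', rfl⟩ : ∃ v', v = v' + 1 := ⟨v - 1, by omega⟩
    have hgh : (p:ℤ) ∣ g1 * h1 :=
      ⟨-(δ*(p:ℤ)^v'*h2) - g2*η*(p:ℤ)^v', by linear_combination e2⟩
    rcases hPp.dvd_mul.mp hgh with h | h
    · exact hg1 h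
    · apply hg1
      apply punit _ η hη
      obtain ⟨k, hk⟩ := h
      exact ⟨-(δ*k), by linear_combination h10 - δ*hk⟩
  · -- w < v : p ∣ g1
    obtain ⟨t, rfl⟩ : ∃ t, v = w + t := ⟨v - w, by omega⟩
    have ht1 : 1 ≤ t := by omega
    have h9 : (p:ℤ)^w * (δ*(p:ℤ)^t*h1 + g1*η) = 0 := by linear_combination e1
    have h10 := (mul_eq_zero.mp h9).resolve_left (pow_ne_zero w hP)
    obtain ⟨t', rfl⟩ : ∃ t', t = t' + 1 := ⟨t - 1, by omega⟩
    apply hg1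
    apply punit _ η hη
    exact ⟨-(δ*(p:ℤ)^t'*h1), by linear_combination h10⟩

lemma msprod_ge (S : Multiset ℂ) (h : ∀ z ∈ S, 1 ≤ ‖z‖) : 1 ≤ ‖S.prod‖ := by
  induction S using Multiset.induction with
  | empty => simp
  | cons a s ih =>
    rw [Multiset.prod_cons, norm_mul]
    have h1 := h a (Multiset.mem_cons_self a s)
    have h2 := ih (fun z hz => h z (Multiset.mem_cons_of_mem hz))
    nlinarith

lemma msprod_gt (S : Multiset ℂ) (hS : S ≠ 0) (h : ∀ z ∈ S, 1 < ‖z‖) :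
    1 < ‖S.prod‖ := by
  obtain ⟨a, ha⟩ := Multiset.exists_mem_of_ne_zero hS
  obtain ⟨s, rfl⟩ := Multiset.exists_cons_of_mem ha
  rw [Multiset.prod_cons, norm_mul]
  have h1 := h a (Multiset.mem_cons_self a s)
  have h2 := msprod_ge s (fun z hz => (h z (Multiset.mem_cons_of_mem hz)).le)
  nlinarith

/-- If every complex root of `f` has absolute value `> 1`, then every nonconstant
divisor of `f` has constant coefficient of absolute value at least 2. -/
lemma keyB (f g : ℤ[X]) (hd : g ∣ f) (hgdeg : g.natDegree ≠ 0)
    (hroots : ∀ z : ℂ, Polynomial.aeval z f = 0 → 1 < ‖z‖) :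
    2 ≤ (g.coeff 0).natAbs := by
  have hg0 : g ≠ 0 := fun h => hgdeg (by simp [h])
  set φ := Int.castRingHom ℂ with hφ
  have hinj : Function.Injective φ := Int.cast_injective
  set G := g.map φ with hG
  have hGne : G ≠ 0 := by
    simpa [hG, Polynomial.map_eq_zero_iff hinj] using hg0
  have hGdeg : G.natDegree = g.natDegree := natDegree_map_eq_of_injective hinj g
  have hsplit : G.Splits := IsAlgClosed.splits G
  have hcard : G.roots.card = G.natDegree := (splits_iff_card_roots).mp hsplit
  have hrootsne : G.roots ≠ 0 := by
    intro h0
    rw [h0] at hcard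
    simp at hcard
    omega
  have hroot_abs : ∀ z ∈ G.roots, 1 < ‖z‖ := by
    intro z hz
    have hz' : G.eval z = 0 := by
      exact (Polynomial.mem_roots hGne).mp hz
    have hgz : Polynomial.aeval z g = 0 := by
      rwa [Polynomial.aeval_def, ← Polynomial.eval_map]
    obtain ⟨k, rfl⟩ := hd
    apply hroots
    rw [map_mul, hgz, zero_mul]
  have hGfact := hsplit.eq_prod_roots
  have heval : G.eval 0 = G.leadingCoeff * ((G.roots.map (fun z => -z)).prod) := by
    conv_lhs => rw [hGfact]
    rw [eval_mul, eval_C, eval_multiset_prod, Multiset.map_map]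
    congr 2
    apply Multiset.map_congr rfl
    intro z _
    simp
  have habs : ‖G.eval 0‖ = ‖G.leadingCoeff‖ * ‖(G.roots.map (fun z => -z)).prod‖ := by
    rw [heval, norm_mul]
  have hlead : 1 ≤ ‖G.leadingCoeff‖ := by
    have : G.leadingCoeff = (g.leadingCoeff : ℂ) := by
      simp [hG, Polynomial.leadingCoeff_map_of_injective (by simpa using hinj)]
    rw [this, Complex.norm_intCast]
    have : g.leadingCoeff ≠ 0 := leadingCoeff_ne_zero.mpr hg0
    have : 1 ≤ |g.leadingCoeff| := Int.one_le_abs this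
    exact_mod_cast this
  have hprodgt : 1 < ‖(G.roots.map (fun z => -z)).prod‖ := by
    apply msprod_gt
    · simpa using hrootsne
    · intro z hz
      obtain ⟨y, hy, rfl⟩ := Multiset.mem_map.mp hz
      simpa using hroot_abs y hy
  have hfin : 1 < ‖G.eval 0‖ := by
    rw [habs]; nlinarith
  have : G.eval 0 = ((g.coeff 0 : ℤ) : ℂ) := by
    rw [hG, Polynomial.eval_map]
    simp [Polynomial.eval₂_at_zero]
  rw [this, Complex.norm_intCast] at hfin
  have h2 : (1 : ℤ) < |g.coeff 0| := by exact_mod_cast hfin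
  rw [Int.abs_eq_natAbs] at h2
  exact_mod_cast h2

lemma pdvd0 (p u : ℕ) (hp : p.Prime) (ε x y : ℤ) (hε : ε = 1 ∨ ε = -1)
    (e : x * y = ε * (p:ℤ)^u) (hx : 2 ≤ x.natAbs) : (p:ℤ) ∣ x := by
  have hd : x.natAbs ∣ p^u := by
    have h1 : x ∣ ε*(p:ℤ)^u := ⟨y, e.symm⟩
    have h2 : x ∣ (p:ℤ)^u := by
      rcases hε with rfl | rfl
      · simpa using h1
      · simpa [neg_mul, dvd_neg] using h1
    simpa [Int.natAbs_pow] using Int.natAbs_dvd_natAbs.mpr h2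
  obtain ⟨v, hvu, hxv⟩ := (Nat.dvd_prime_pow hp).mp hd
  have hv1 : v ≠ 0 := by
    rintro rfl; rw [hxv] at hx; simp at hx
  have h3 : p ∣ x.natAbs := hxv ▸ dvd_pow_self p hv1
  exact Int.natAbs_dvd.mp (dvd_trans (Int.natCast_dvd_natCast.mpr h3) (Int.natAbs_dvd.mpr dvd_rfl))

theorem stmt_9 (p u : ℕ) (hp : p.Prime) (hu : 2 ≤ u) (ε : ℤ) (hε : ε = 1 ∨ ε = -1)
    (r : ℕ) (n : Fin (r + 1) → ℕ) (a : Fin (r + 1) → ℤ)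
    (hmono : StrictMono n) (hn1 : n 0 = 3) (hu3 : ¬ 3 ∣ u)
    (hpa : ¬ (p : ℤ) ∣ a 0 * a (Fin.last r))
    (ha : ∀ i, a i ≠ 0)
    (hdom : ((p : ℤ)) ^ u > ∑ i, |a i|)
    (f : ℤ[X]) (hf : f = C (ε * (p : ℤ) ^ u) + ∑ i, C (a i) * X ^ (n i)) :
    Irreducible f := by
  have hpa0 : ¬ (p:ℤ) ∣ a 0 := fun hd => hpa (hd.mul_right _)
  have hn3 : ∀ i, 3 ≤ n i := fun i => hn1 ▸ hmono.monotone (Fin.zero_le i)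
  have hcoeff : ∀ k, f.coeff k =
      (if k = 0 then ε * (p:ℤ)^u else 0) + ∑ i, (if n i = k then a i else 0) := by
    intro k
    rw [hf, coeff_add, coeff_C, finset_sum_coeff]
    congr 1
    apply Finset.sum_congr rfl
    intro i _
    rw [coeff_C_mul, coeff_X_pow]
    rcases eq_or_ne (n i) k with h | h
    · simp [h]
    · simp [h, Ne.symm h]
  have hnne : ∀ (k : ℕ), k < 3 → ∀ i : Fin (r+1), n i ≠ k := by
    intro k hk i hni
    have := hn3 i
    omega
  have hc0 : f.coeff 0 = ε * (p:ℤ)^u := by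
    rw [hcoeff]
    simp [hnne 0 (by norm_num)]
  have hc1 : f.coeff 1 = 0 := by
    rw [hcoeff]
    simp [hnne 1 (by norm_num)]
  have hc2 : f.coeff 2 = 0 := by
    rw [hcoeff]
    simp [hnne 2 (by norm_num)]
  have hc3 : f.coeff 3 = a 0 := by
    rw [hcoeff]
    have hiff : ∀ i : Fin (r+1), n i = 3 ↔ i = 0 :=
      fun i => ⟨fun h => hmono.injective (h.trans hn1.symm), fun h => h ▸ hn1⟩
    simp only [hiff]
    simp [Finset.sum_ite_eq']
  -- all complex roots have absolute value > 1
  have hroots : ∀ z : ℂ, Polynomial.aeval z f = 0 → 1 < ‖z‖ := by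
    intro z hz
    by_contra habs
    push_neg at habs
    rw [hf] at hz
    simp only [map_add, map_sum, map_mul, aeval_C, map_pow, aeval_X] at hz
    simp only [algebraMap_int_eq, Int.coe_castRingHom] at hz
    have hmain : ((ε * (p:ℤ)^u : ℤ) : ℂ) = -∑ i, (a i : ℂ) * z ^ (n i) := by
      push_cast at hz ⊢
      linear_combination hz
    have hL : ‖((ε * (p:ℤ)^u : ℤ) : ℂ)‖ = (p:ℝ)^u := by
      rcases hε with rfl | rfl <;> push_cast <;> simp [map_pow]
    have hR : ‖∑ i, (a i : ℂ) * z ^ (n i)‖ ≤ ∑ i, (|a i| : ℝ) := by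
      refine le_trans (norm_sum_le _ _) (Finset.sum_le_sum ?_)
      intro i _
      rw [norm_mul, norm_pow, Complex.norm_intCast]
      have h1 : ‖z‖ ^ (n i) ≤ 1 :=
        pow_le_one₀ (norm_nonneg _) habs
      have h2 : (0:ℝ) ≤ |(a i : ℝ)| := abs_nonneg _
      have h3 : |(a i : ℝ)| * ‖z‖ ^ (n i) ≤ |(a i : ℝ)| * 1 :=
        mul_le_mul_of_nonneg_left h1 h2
      have h4 : |(a i : ℝ)| = (|a i| : ℝ) := by norm_cast
      rw [mul_one, h4] at h3
      exact h3
    have hlt : (∑ i, (|a i| : ℝ)) < (p:ℝ)^u := by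
      have := hdom
      push_cast at this ⊢
      exact_mod_cast this
    rw [hmain, norm_neg] at hL
    linarith [hR, hL.symm.le, hL.ge]
  constructor
  · -- f is not a unit
    intro hunit
    obtain ⟨c, _, hcf⟩ := Polynomial.isUnit_iff.mp hunit
    have : f.coeff 3 = 0 := by rw [← hcf, coeff_C]; simp
    exact ha 0 (by rw [← hc3, this])
  · intro g h hgh
    by_contra hcon
    rw [not_or] at hcon
    obtain ⟨hg, hh⟩ := hcon
    -- constant factors are units
    have hconst : ∀ q q' : ℤ[X], f = q * q' → q.natDegree = 0 → IsUnit q := by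
      intro q q' hqq hq0
      obtain ⟨c, rfl⟩ := Polynomial.natDegree_eq_zero.mp hq0
      have hc0' : c * q'.coeff 0 = ε * (p:ℤ)^u := by
        rw [← hc0, hqq, coeff_C_mul]
      have hc3' : c * q'.coeff 3 = a 0 := by
        rw [← hc3, hqq, coeff_C_mul]
      have hcd : c.natAbs ∣ p^u := by
        have h1 : c ∣ ε*(p:ℤ)^u := ⟨q'.coeff 0, hc0'.symm⟩
        have h2 : c ∣ (p:ℤ)^u := by
          rcases hε with rfl | rfl
          · simpa using h1
          · simpa [neg_mul, dvd_neg] using h1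
        simpa [Int.natAbs_pow] using Int.natAbs_dvd_natAbs.mpr h2
      obtain ⟨j, hju, hcj⟩ := (Nat.dvd_prime_pow hp).mp hcd
      rcases Nat.eq_zero_or_pos j with rfl | hj
      · rw [Polynomial.isUnit_C, Int.isUnit_iff_natAbs_eq]
        simpa using hcj
      · exfalso
        apply hpa0
        have h3 : p ∣ c.natAbs := hcj ▸ dvd_pow_self p (by omega)
        have h4 : (p:ℤ) ∣ c :=
          Int.natAbs_dvd.mp (dvd_trans (Int.natCast_dvd_natCast.mpr h3) (Int.natAbs_dvd.mpr dvd_rfl))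
        exact h4.trans ⟨q'.coeff 3, hc3'.symm⟩
    have hgd : g.natDegree ≠ 0 := fun h0 => hg (hconst g h hgh h0)
    have hhd : h.natDegree ≠ 0 := fun h0 => hh (hconst h g (by rw [hgh, mul_comm]) h0)
    have hgn : 2 ≤ (g.coeff 0).natAbs := keyB f g ⟨h, hgh⟩ hgd hroots
    have hhn : 2 ≤ (h.coeff 0).natAbs := keyB f h ⟨g, by rw [hgh, mul_comm]⟩ hhd hroots
    -- coefficient equations
    have e0 : g.coeff 0 * h.coeff 0 = ε * (p:ℤ)^u := by
      have h1 : (g*h).coeff 0 = ε * (p:ℤ)^u := by rw [← hgh]; exact hc0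
      rw [mul_coeff_zero] at h1
      exact h1
    have e1 : g.coeff 0 * h.coeff 1 + g.coeff 1 * h.coeff 0 = 0 := by
      have h1 : (g*h).coeff 1 = 0 := by rw [← hgh]; exact hc1
      rw [coeff_mul] at h1
      simp [Finset.Nat.sum_antidiagonal_eq_sum_range_succ_mk, Finset.sum_range_succ] at h1
      linear_combination h1
    have e2 : g.coeff 0 * h.coeff 2 + g.coeff 1 * h.coeff 1 + g.coeff 2 * h.coeff 0 = 0 := by
      have h1 : (g*h).coeff 2 = 0 := by rw [← hgh]; exact hc2
      rw [coeff_mul] at h1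
      simp [Finset.Nat.sum_antidiagonal_eq_sum_range_succ_mk, Finset.sum_range_succ] at h1
      linear_combination h1
    have e3 : g.coeff 0 * h.coeff 3 + g.coeff 1 * h.coeff 2 + g.coeff 2 * h.coeff 1
        + g.coeff 3 * h.coeff 0 = a 0 := by
      have h1 : (g*h).coeff 3 = a 0 := by rw [← hgh]; exact hc3
      rw [coeff_mul] at h1
      simp [Finset.Nat.sum_antidiagonal_eq_sum_range_succ_mk, Finset.sum_range_succ] at h1
      linear_combination h1
    by_cases hpg1 : (p:ℤ) ∣ g.coeff 1
    · by_cases hph1 : (p:ℤ) ∣ h.coeff 1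
      · -- both coeff-1's divisible by p : then p ∣ a 0
        have hg0d : (p:ℤ) ∣ g.coeff 0 := pdvd0 p u hp ε (g.coeff 0) (h.coeff 0) hε e0 hgn
        have hh0d : (p:ℤ) ∣ h.coeff 0 :=
          pdvd0 p u hp ε (h.coeff 0) (g.coeff 0) hε (by linear_combination e0) hhn
        apply hpa0
        rw [← e3]
        exact dvd_add (dvd_add (dvd_add (hg0d.mul_right _) (hpg1.mul_right _))
          ((hph1.mul_left _))) (hh0d.mul_left _)
      · exact aux0 p u hp hu3 (a 0) (h.coeff 1) (h.coeff 2) (h.coeff 3)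
          (g.coeff 1) (g.coeff 2) (g.coeff 3) ε hε hpa0
          (by linear_combination e0) (by linear_combination e1)
          (by linear_combination e2) (by linear_combination e3) hhn hgn hph1
    · exact aux0 p u hp hu3 (a 0) (g.coeff 1) (g.coeff 2) (g.coeff 3)
        (h.coeff 1) (h.coeff 2) (h.coeff 3) ε hε hpa0 e0 e1 e2 e3 hgn hhn hpg1
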